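/- Let X be a d × d complex matrix. Then the numerical radius w(X) = max over unit vectors ψ ∈ ℂ^d of |⟨ψ, X*ψ⟩| satisfies w(X) ≤ sqrt( λ_max( (Xᴴ*X + X*Xᴴ)/2 ) ); equivalently, the numerical radius is at most the operator norm of the Cartesian modulus |X|_C = ((Xᴴ*X + X*Xᴴ)/2)^(1/2). -/

import Mathlib

open Matrix BigOperators

open scoped Classical in
/-- The largest eigenvalue of a (Hermitian) matrix. -/
noncomputable def lamMax {d : ℕ} (M : Matrix (Fin d) (Fin d) ℂ) : ℝ :=
  if h : M.IsHermitian then ⨆ i, h.eigenvalues i else 0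

lemma dot_star_self_eq {d : ℕ} (v : Fin d → ℂ) :
    dotProduct (star v) v = ((∑ i, Complex.normSq (v i) : ℝ) : ℂ) := by
  simp [dotProduct, Complex.normSq_eq_conj_mul_self]

lemma inner_equiv_symm' {d : ℕ} (x y : Fin d → ℂ) :
    inner ℂ ((WithLp.equiv 2 (Fin d → ℂ)).symm x) ((WithLp.equiv 2 (Fin d → ℂ)).symm y)
      = dotProduct (star x) y := by
  rw [dotProduct_comm]; rfl

lemma rayleigh_le {d : ℕ} {M : Matrix (Fin d) (Fin d) ℂ} (hM : M.IsHermitian) (ψ : Fin d → ℂ)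
    (hψ : ∑ i, ‖ψ i‖ ^ 2 = 1) :
    Complex.re (dotProduct (star ψ) (M.mulVec ψ)) ≤ ⨆ i, hM.eigenvalues i := by
  have hd : Nonempty (Fin d) := by
    by_contra h
    simp [not_nonempty_iff.mp h] at hψ
  set U : Matrix (Fin d) (Fin d) ℂ := (hM.eigenvectorUnitary : Matrix (Fin d) (Fin d) ℂ) with hU
  set c : Fin d → ℂ := (star U) *ᵥ ψ with hc
  have hUU : U * star U = 1 := (Matrix.mem_unitaryGroup_iff).mp hM.eigenvectorUnitary.2
  have hsc : star ψ ᵥ* U = star c := by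
    rw [hc, Matrix.star_mulVec, Matrix.star_eq_conjTranspose, Matrix.conjTranspose_conjTranspose]
  have key : dotProduct (star ψ) (M.mulVec ψ)
      = ((∑ i, hM.eigenvalues i * Complex.normSq (c i) : ℝ) : ℂ) := by
    conv_lhs => rw [hM.spectral_theorem, Unitary.conjStarAlgAut_apply]
    rw [← Matrix.mulVec_mulVec, ← Matrix.mulVec_mulVec, dotProduct_mulVec, hsc]
    push_cast
    simp [dotProduct, Matrix.mulVec_diagonal, Complex.normSq_eq_conj_mul_self]
    refine Finset.sum_congr rfl fun i _ => ?_
    rw [show star (hM.eigenvectorUnitary : Matrix (Fin d) (Fin d) ℂ) *ᵥ ψ = c from rfl]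
    ring
  have hnorm : ∑ i, Complex.normSq (c i) = 1 := by
    have h1 : dotProduct (star c) c = 1 := by
      rw [← hsc, ← dotProduct_mulVec, hc, Matrix.mulVec_mulVec, hUU, Matrix.one_mulVec,
        dot_star_self_eq]
      norm_cast
      simpa [Complex.sq_norm] using hψ
    rw [dot_star_self_eq] at h1
    exact_mod_cast h1
  rw [key, Complex.ofReal_re]
  calc ∑ i, hM.eigenvalues i * Complex.normSq (c i)
      ≤ ∑ i, (⨆ j, hM.eigenvalues j) * Complex.normSq (c i) := by
        refine Finset.sum_le_sum fun i _ => ?_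
        exact mul_le_mul_of_nonneg_right (le_ciSup (Set.Finite.bddAbove (Set.finite_range _)) i)
          (Complex.normSq_nonneg _)
    _ = ⨆ j, hM.eigenvalues j := by rw [← Finset.mul_sum, hnorm, mul_one]

/-- The numerical radius of `X` is at most the operator norm of the Cartesian
modulus of `X`: for every unit vector `ψ`,
`|⟨ψ, Xψ⟩| ≤ sqrt(λ_max((XᴴX + XXᴴ)/2))`. -/
theorem numerical_radius_le_cartesian_modulus_norm (d : ℕ)
    (X : Matrix (Fin d) (Fin d) ℂ) (ψ : Fin d → ℂ)
    (hψ : ∑ i, ‖ψ i‖ ^ 2 = 1) :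
    ‖dotProduct (star ψ) (X.mulVec ψ)‖
      ≤ Real.sqrt (lamMax ((2 : ℂ)⁻¹ • (Xᴴ * X + X * Xᴴ))) := by
  classical
  set M : Matrix (Fin d) (Fin d) ℂ := (2 : ℂ)⁻¹ • (Xᴴ * X + X * Xᴴ) with hMdef
  have hM : M.IsHermitian := by
    simp [hMdef, Matrix.IsHermitian, Matrix.conjTranspose_smul, Matrix.conjTranspose_add,
      Matrix.conjTranspose_mul, Matrix.conjTranspose_conjTranspose, add_comm]
  -- Euclidean space vectors
  set u : EuclideanSpace ℂ (Fin d) := (WithLp.equiv 2 (Fin d → ℂ)).symm ψ with hu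
  set a : EuclideanSpace ℂ (Fin d) := (WithLp.equiv 2 (Fin d → ℂ)).symm (X *ᵥ ψ) with ha
  set b : EuclideanSpace ℂ (Fin d) := (WithLp.equiv 2 (Fin d → ℂ)).symm (Xᴴ *ᵥ ψ) with hb
  have hun : ‖u‖ = 1 := by
    rw [hu, EuclideanSpace.norm_eq]
    have : ∀ i, ‖((WithLp.equiv 2 (Fin d → ℂ)).symm ψ : EuclideanSpace ℂ (Fin d)) i‖ ^ 2
        = ‖ψ i‖ ^ 2 := fun i => by
      simp [WithLp.equiv_symm_apply]
    simp_rw [this, hψ, Real.sqrt_one]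
  have hca : ‖dotProduct (star ψ) (X.mulVec ψ)‖ ≤ ‖a‖ := by
    have h1 : inner ℂ u a = dotProduct (star ψ) (X.mulVec ψ) :=
      inner_equiv_symm' ψ (X *ᵥ ψ)
    calc ‖dotProduct (star ψ) (X.mulVec ψ)‖
        = ‖(inner ℂ u a : ℂ)‖ := by rw [h1]
      _ ≤ ‖u‖ * ‖a‖ := norm_inner_le_norm u a
      _ = ‖a‖ := by rw [hun, one_mul]
  have hcb : ‖dotProduct (star ψ) (X.mulVec ψ)‖ ≤ ‖b‖ := by
    have h1 : (inner ℂ b u : ℂ) = dotProduct (star ψ) (X.mulVec ψ) := by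
      rw [hb, hu, inner_equiv_symm', Matrix.star_mulVec,
        Matrix.conjTranspose_conjTranspose, ← dotProduct_mulVec]
    calc ‖dotProduct (star ψ) (X.mulVec ψ)‖
        = ‖(inner ℂ b u : ℂ)‖ := by rw [h1]
      _ ≤ ‖b‖ * ‖u‖ := norm_inner_le_norm b u
      _ = ‖b‖ := by rw [hun, mul_one]
  have hna : ‖a‖ ^ 2 = Complex.re (dotProduct (star ψ) ((Xᴴ * X).mulVec ψ)) := by
    have h1 : ((inner ℂ a a : ℂ)) = dotProduct (star ψ) ((Xᴴ * X).mulVec ψ) := by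
      rw [ha, inner_equiv_symm', Matrix.star_mulVec,
        ← dotProduct_mulVec, Matrix.mulVec_mulVec]
    rw [← h1]
    rw [← inner_self_eq_norm_sq (𝕜 := ℂ) a]
    rfl
  have hnb : ‖b‖ ^ 2 = Complex.re (dotProduct (star ψ) ((X * Xᴴ).mulVec ψ)) := by
    have h1 : ((inner ℂ b b : ℂ)) = dotProduct (star ψ) ((X * Xᴴ).mulVec ψ) := by
      rw [hb, inner_equiv_symm', Matrix.star_mulVec,
        Matrix.conjTranspose_conjTranspose, ← dotProduct_mulVec, Matrix.mulVec_mulVec]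
    rw [← h1]
    rw [← inner_self_eq_norm_sq (𝕜 := ℂ) b]
    rfl
  have hM2 : Complex.re (dotProduct (star ψ) (M.mulVec ψ))
      = (‖a‖ ^ 2 + ‖b‖ ^ 2) / 2 := by
    rw [hna, hnb, hMdef]
    rw [Matrix.smul_mulVec, dotProduct_smul, Matrix.add_mulVec,
      dotProduct_add]
    simp [Complex.add_re]
    ring
  have hray := rayleigh_le hM ψ hψ
  have hL : lamMax M = ⨆ i, hM.eigenvalues i := by rw [lamMax, dif_pos hM]
  have hsq : ‖dotProduct (star ψ) (X.mulVec ψ)‖ ^ 2 ≤ lamMax M := by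
    rw [hL]
    nlinarith [norm_nonneg (dotProduct (star ψ) (X.mulVec ψ)), hca, hcb, hM2,
      norm_nonneg a, norm_nonneg b, sq_nonneg (‖a‖ - ‖b‖)]
  have := Real.sqrt_le_sqrt hsq
  rwa [Real.sqrt_sq (norm_nonneg _)] at this
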